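/- Every complex symmetric n×n matrix P satisfying P² = P and rank(P) = d is conjugate, under the complex orthogonal group O(n,ℂ) acting by Q ↦ OQOᵀ, to the diagonal matrix M_d with d ones followed by n−d zeros on the diagonal. -/

import Mathlib

open Matrix Module

private noncomputable def dotB (n : ℕ) : LinearMap.BilinForm ℂ (Fin n → ℂ) :=
  LinearMap.mk₂ ℂ (fun x y => x ⬝ᵥ y)
    (fun x y z => add_dotProduct x y z)
    (fun c x y => smul_dotProduct c x y)
    (fun x y z => dotProduct_add x y z)
    (fun c x y => dotProduct_smul c x y)

private lemma dotB_apply {n : ℕ} (x y : Fin n → ℂ) : dotB n x y = x ⬝ᵥ y := rfl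

private lemma dotB_symm {n : ℕ} : (dotB n).IsSymm := ⟨fun x y => dotProduct_comm x y⟩

private lemma nd_of_left {V : Type*} [AddCommGroup V] [Module ℂ V]
    {B : LinearMap.BilinForm ℂ V} (hs : B.IsSymm) (h : B.SeparatingLeft) : B.Nondegenerate :=
  ⟨h, fun x hx => h x fun y => (hs.eq x y).trans (hx y)⟩

/-- orthonormal basis for a nondegenerate symmetric bilinear form over ℂ -/
private lemma exists_orthonormal {V : Type*} [AddCommGroup V] [Module ℂ V]
    [FiniteDimensional ℂ V] (B : LinearMap.BilinForm ℂ V) (hs : B.IsSymm)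
    (hn : B.Nondegenerate) :
    ∃ v : Basis (Fin (finrank ℂ V)) ℂ V,
      ∀ i j, B (v i) (v j) = if i = j then 1 else 0 := by
  obtain ⟨v, hv⟩ := LinearMap.BilinForm.exists_orthogonal_basis (LinearMap.BilinForm.isSymm_iff.1 hs)
  have hne : ∀ i, B (v i) (v i) ≠ 0 := fun i =>
    LinearMap.BilinForm.iIsOrtho.not_isOrtho_basis_self_of_nondegenerate hv hn i
  choose s hs2 using fun i => IsAlgClosed.exists_pow_nat_eq (B (v i) (v i)) (two_pos)
  have hsne : ∀ i, s i ≠ 0 := by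
    intro i h
    apply hne i
    rw [← hs2 i, h]; ring
  have hu : ∀ i, IsUnit ((s i)⁻¹) := fun i => (isUnit_iff_ne_zero).2 (inv_ne_zero (hsne i))
  refine ⟨v.isUnitSMul hu, fun i j => ?_⟩
  rw [Basis.isUnitSMul_apply, Basis.isUnitSMul_apply, LinearMap.map_smul₂, LinearMap.map_smul,
    smul_eq_mul, smul_eq_mul]
  by_cases h : i = j
  · subst h
    simp only [if_pos rfl]
    rw [← hs2 i, pow_two]
    field_simp
    exact div_self (hsne i)
  · rw [hv h, if_neg h]
    ring

theorem stmt_5 (n d : ℕ) (P : Matrix (Fin n) (Fin n) ℂ)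
    (hsymm : P.IsSymm) (hidem : P * P = P) (hrank : P.rank = d) :
    ∃ O : Matrix (Fin n) (Fin n) ℂ, O * Oᵀ = 1 ∧
      O * P * Oᵀ = Matrix.diagonal (fun i : Fin n => if (i : ℕ) < d then 1 else 0) := by
  classical
  set f := P.mulVecLin with hfdef
  have hff : ∀ x, f (f x) = f x := by
    intro x
    have : f ∘ₗ f = f := by rw [hfdef, ← Matrix.mulVecLin_mul, hidem]
    exact congrFun (congrArg (fun g => g.toFun) this) x
  set V := LinearMap.range f with hV
  set W := LinearMap.ker f with hW
  -- f fixes V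
  have hfix : ∀ x : Fin n → ℂ, x ∈ V → f x = x := by
    rintro x ⟨y, rfl⟩; exact hff y
  have hker : ∀ x : Fin n → ℂ, x ∈ W → f x = 0 := fun x hx => hx
  have hproj : LinearMap.IsProj V f := ⟨fun x => ⟨x, rfl⟩, hfix⟩
  have hcompl : IsCompl V W := hproj.isCompl
  -- dimensions
  have hdV : finrank ℂ V = d := hrank
  have htot : d + finrank ℂ W = n := by
    have h1 := LinearMap.finrank_range_add_finrank_ker f
    rw [← hV, ← hW, hdV] at h1
    simpa [finrank_pi] using h1
  have hdn : d + (n - d) = n := by omega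
  have hdW : finrank ℂ W = n - d := by omega
  -- the bilinear form
  set B := dotB n with hB
  -- symmetry key fact
  have hkey : ∀ x y : Fin n → ℂ, B (f x) y = B x (f y) := by
    intro x y
    rw [dotB_apply, dotB_apply]
    show (P *ᵥ x) ⬝ᵥ y = x ⬝ᵥ (P *ᵥ y)
    rw [Matrix.dotProduct_mulVec, ← hsymm, Matrix.vecMul_transpose, hsymm]
  have hBnd : B.Nondegenerate := by
    refine nd_of_left dotB_symm ?_
    intro x hx
    funext j
    have := hx (Pi.single j 1)
    rw [dotB_apply, dotProduct_single, mul_one] at this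
    simpa using this
  -- nondegenerate restrictions
  have hndV : (B.restrict V).Nondegenerate := by
    refine nd_of_left (dotB_symm.restrict V) ?_
    rintro ⟨x, hxV⟩ hx
    have : x = 0 := by
      apply hBnd.1
      intro z
      calc B x z = B (f x) z := by rw [hfix x hxV]
        _ = B x (f z) := hkey x z
        _ = (B.restrict V) ⟨x, hxV⟩ ⟨f z, ⟨z, rfl⟩⟩ := rfl
        _ = 0 := hx _
    exact Subtype.ext this
  have hndW : (B.restrict W).Nondegenerate := by
    refine nd_of_left (dotB_symm.restrict W) ?_
    rintro ⟨x, hxW⟩ hx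
    have : x = 0 := by
      apply hBnd.1
      intro z
      have hz : z - f z ∈ W := by
        simp only [hW, LinearMap.mem_ker, map_sub, hff, sub_self]
      calc B x z = B x (f z) + B x (z - f z) := by rw [← map_add, add_sub_cancel]
        _ = B (f x) z + B x (z - f z) := by rw [hkey]
        _ = B x (z - f z) := by rw [hker x hxW, map_zero, LinearMap.zero_apply, zero_add]
        _ = (B.restrict W) ⟨x, hxW⟩ ⟨z - f z, hz⟩ := rfl
        _ = 0 := hx _
    exact Subtype.ext this
  -- orthonormal bases
  obtain ⟨bV0, hbV⟩ := exists_orthonormal (B.restrict V) (dotB_symm.restrict V) hndV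
  obtain ⟨bW0, hbW⟩ := exists_orthonormal (B.restrict W) (dotB_symm.restrict W) hndW
  set bV := bV0.reindex (finCongr hdV) with hbVdef
  set bW := bW0.reindex (finCongr hdW) with hbWdef
  have hbV' : ∀ i j : Fin d, B (bV i) (bV j) = if i = j then 1 else 0 := by
    intro i j
    rw [hbVdef, Basis.reindex_apply, Basis.reindex_apply]
    rw [show (B ((bV0 ((finCongr hdV).symm i) : V) : Fin n → ℂ))
        ((bV0 ((finCongr hdV).symm j) : V) : Fin n → ℂ)
        = (B.restrict V) (bV0 ((finCongr hdV).symm i)) (bV0 ((finCongr hdV).symm j)) from rfl,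
      hbV]
    simp [Fin.ext_iff]
  have hbW' : ∀ i j, B ((bW i : Fin n → ℂ)) (bW j) = if i = j then 1 else 0 := by
    intro i j
    rw [hbWdef, Basis.reindex_apply, Basis.reindex_apply]
    rw [show (B ((bW0 ((finCongr hdW).symm i) : W) : Fin n → ℂ))
        ((bW0 ((finCongr hdW).symm j) : W) : Fin n → ℂ)
        = (B.restrict W) (bW0 ((finCongr hdW).symm i)) (bW0 ((finCongr hdW).symm j)) from rfl,
      hbW]
    simp [Fin.ext_iff]
  -- cross orthogonality
  have hcross : ∀ (v w : Fin n → ℂ), v ∈ V → w ∈ W → B v w = 0 := by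
    intro v w hv hw
    rw [← hfix v hv, hkey, hker w hw, map_zero]
  -- combined basis
  set e : Fin d ⊕ Fin (n - d) ≃ Fin n := finSumFinEquiv.trans (finCongr hdn) with hedef
  set b : Basis (Fin n) ℂ (Fin n → ℂ) :=
    ((bV.prod bW).map (Submodule.prodEquivOfIsCompl V W hcompl)).reindex e with hbdef
  set g : Fin d ⊕ Fin (n - d) → (Fin n → ℂ) :=
    Sum.elim (fun i => (bV i : Fin n → ℂ)) (fun j => (bW j : Fin n → ℂ)) with hgdef
  have hbe : ∀ k, b (e k) = g k := by
    intro k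
    rw [hbdef, Basis.reindex_apply, Equiv.symm_apply_apply, Basis.map_apply]
    cases k with
    | inl i =>
      rw [Basis.prod_apply]
      simp [Submodule.coe_prodEquivOfIsCompl', hgdef]
    | inr j =>
      rw [Basis.prod_apply]
      simp [Submodule.coe_prodEquivOfIsCompl', hgdef]
  -- membership properties
  have hmem : ∀ k, (g k ∈ V ∧ ((e k : ℕ) < d)) ∨ (g k ∈ W ∧ ¬((e k : ℕ) < d)) := by
    intro k
    cases k with
    | inl i =>
      left
      refine ⟨(bV i).2, ?_⟩
      simp [hedef, finSumFinEquiv_apply_left, i.isLt]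
    | inr j =>
      right
      refine ⟨(bW j).2, ?_⟩
      simp [hedef, finSumFinEquiv_apply_right]
  -- orthonormality of b
  have hortho : ∀ i j : Fin n, (b i) ⬝ᵥ (b j) = if i = j then 1 else 0 := by
    intro i j
    obtain ⟨k, rfl⟩ := e.surjective i
    obtain ⟨l, rfl⟩ := e.surjective j
    rw [hbe, hbe, show (g k ⬝ᵥ g l) = B (g k) (g l) from rfl]
    have : (e k = e l) ↔ (k = l) := e.apply_eq_iff_eq
    rw [show (if e k = e l then (1:ℂ) else 0) = if k = l then 1 else 0 by
      simp [this]]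
    cases k with
    | inl i' =>
      cases l with
      | inl j' => rw [hgdef]; simpa using hbV' i' j'
      | inr j' =>
        rw [hgdef]
        simp only [Sum.elim_inl, Sum.elim_inr, reduceCtorEq, if_false]
        exact hcross _ _ (bV i').2 (bW j').2
    | inr i' =>
      cases l with
      | inl j' =>
        rw [hgdef]
        simp only [Sum.elim_inl, Sum.elim_inr, reduceCtorEq, if_false]
        show ((bW i' : Fin n → ℂ) ⬝ᵥ (bV j' : Fin n → ℂ)) = 0
        rw [dotProduct_comm]
        exact hcross _ _ (bV j').2 (bW i').2
      | inr j' => rw [hgdef]; simpa using hbW' i' j'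
  -- action of P on b
  have hPb : ∀ i : Fin n, P *ᵥ (b i) = if (i : ℕ) < d then b i else 0 := by
    intro i
    obtain ⟨k, rfl⟩ := e.surjective i
    rcases hmem k with ⟨hv, hlt⟩ | ⟨hw, hlt⟩
    · rw [if_pos hlt, hbe]
      exact hfix _ hv
    · rw [if_neg hlt, hbe]
      exact hker _ hw
  -- define O
  refine ⟨Matrix.of (fun i j => b i j), ?_, ?_⟩
  · ext i j
    rw [Matrix.mul_apply, Matrix.one_apply]
    simpa [dotProduct] using hortho i j
  · ext i j
    rw [Matrix.mul_assoc, Matrix.mul_apply, Matrix.diagonal_apply]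
    have : ∀ k, (P * (Matrix.of (fun i j => b i j))ᵀ) k j = (P *ᵥ b j) k := by
      intro k
      rw [Matrix.mul_apply]
      rfl
    calc ∑ k, (Matrix.of (fun i j => b i j)) i k * (P * (Matrix.of (fun i j => b i j))ᵀ) k j
        = ∑ k, b i k * (P *ᵥ b j) k := by
          apply Finset.sum_congr rfl; intro k _; rw [this]; rfl
      _ = b i ⬝ᵥ (P *ᵥ b j) := rfl
      _ = (if i = j then (if (i : ℕ) < d then (1:ℂ) else 0) else 0) := by
          rw [hPb j]
          by_cases hj : (j : ℕ) < d
          · rw [if_pos hj, hortho i j]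
            by_cases hij : i = j
            · subst hij; simp [hj]
            · simp [hij]
          · rw [if_neg hj, dotProduct_zero]
            by_cases hij : i = j
            · subst hij; simp [hj]
            · simp [hij]
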